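/- Suppose E is a dust-like self-similar set in a compact metric space. Let K = ⋃_{i=1}^n f_i(E) be a union of pairwise disjoint sets in a metric space, where n ≥ 1 and each f_i : E → f_i(E) is a bilipschitz bijection onto its image. Then K and E are bilipschitz equivalent. -/

import Mathlib

/-- `K ⊆ X` and `K' ⊆ Y` are bilipschitz equivalent (as metric spaces with the
induced metrics). -/
def BilipEquivSets {X Y : Type*} [MetricSpace X] [MetricSpace Y]
    (K : Set X) (K' : Set Y) : Prop :=
  ∃ f : K → K', Function.Bijective f ∧ ∃ C : ℝ, 1 ≤ C ∧ ∀ x y : K,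
    C⁻¹ * dist x y ≤ dist (f x) (f y) ∧ dist (f x) (f y) ≤ C * dist x y


open Set

/-- `φ` maps `E` bijectively onto `F` with two-sided bilipschitz bounds. -/
def BilipOn {X Y : Type*} [MetricSpace X] [MetricSpace Y] (E : Set X) (F : Set Y) : Prop :=
  ∃ φ : X → Y, Set.BijOn φ E F ∧ ∃ C : ℝ, 1 ≤ C ∧ ∀ x ∈ E, ∀ y ∈ E,
    C⁻¹ * dist x y ≤ dist (φ x) (φ y) ∧ dist (φ x) (φ y) ≤ C * dist x y

lemma bilipOn_refl {X : Type*} [MetricSpace X] (E : Set X) : BilipOn E E := by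
  refine ⟨id, Set.bijOn_id E, 1, le_refl _, fun x _ y _ => ?_⟩
  simp

lemma BilipOn.trans {X Y Z : Type*} [MetricSpace X] [MetricSpace Y] [MetricSpace Z]
    {E : Set X} {F : Set Y} {G : Set Z} (h1 : BilipOn E F) (h2 : BilipOn F G) :
    BilipOn E G := by
  obtain ⟨φ, hφ, C1, hC1, hb1⟩ := h1
  obtain ⟨ψ, hψ, C2, hC2, hb2⟩ := h2
  refine ⟨ψ ∘ φ, hψ.comp hφ, C1 * C2, by nlinarith, ?_⟩
  intro x hx y hy
  have hφx : φ x ∈ F := hφ.mapsTo hx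
  have hφy : φ y ∈ F := hφ.mapsTo hy
  have h1 := hb1 x hx y hy
  have h2 := hb2 (φ x) hφx (φ y) hφy
  have hC1p : (0:ℝ) < C1 := lt_of_lt_of_le one_pos hC1
  have hC2p : (0:ℝ) < C2 := lt_of_lt_of_le one_pos hC2
  constructor
  · have : (C1 * C2)⁻¹ * dist x y = C2⁻¹ * (C1⁻¹ * dist x y) := by
      rw [mul_inv]; ring
    rw [this]
    calc C2⁻¹ * (C1⁻¹ * dist x y) ≤ C2⁻¹ * dist (φ x) (φ y) := by
          apply mul_le_mul_of_nonneg_left h1.1 (by positivity)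
      _ ≤ dist ((ψ ∘ φ) x) ((ψ ∘ φ) y) := h2.1
  · calc dist ((ψ ∘ φ) x) ((ψ ∘ φ) y) ≤ C2 * dist (φ x) (φ y) := h2.2
      _ ≤ C2 * (C1 * dist x y) := mul_le_mul_of_nonneg_left h1.2 (le_of_lt hC2p)
      _ = C1 * C2 * dist x y := by ring

lemma BilipOn.symm {X Y : Type*} [MetricSpace X] [MetricSpace Y]
    {E : Set X} {F : Set Y} (hEne : E.Nonempty) (h : BilipOn E F) : BilipOn F E := by
  haveI : Nonempty X := ⟨hEne.choose⟩
  obtain ⟨φ, hφ, C, hC, hb⟩ := h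
  have hCpos : (0:ℝ) < C := lt_of_lt_of_le one_pos hC
  set ψ := Function.invFunOn φ E with hψdef
  have hkey : ∀ y ∈ F, ψ y ∈ E ∧ φ (ψ y) = y := by
    intro y hy
    obtain ⟨x, hx, hxy⟩ := hφ.surjOn hy
    exact ⟨Function.invFunOn_mem ⟨x, hx, hxy⟩, Function.invFunOn_eq ⟨x, hx, hxy⟩⟩
  refine ⟨ψ, ⟨fun y hy => (hkey y hy).1, ?_, ?_⟩, C, hC, ?_⟩
  · -- InjOn
    intro u hu v hv huv
    have := congrArg φ huv
    rw [(hkey u hu).2, (hkey v hv).2] at this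
    exact this
  · -- SurjOn ψ F E
    intro x hx
    refine ⟨φ x, hφ.mapsTo hx, ?_⟩
    have h1 : ψ (φ x) ∈ E := (hkey _ (hφ.mapsTo hx)).1
    have h2 : φ (ψ (φ x)) = φ x := (hkey _ (hφ.mapsTo hx)).2
    exact hφ.injOn h1 hx h2
  · intro u hu v hv
    obtain ⟨hu1, hu2⟩ := hkey u hu
    obtain ⟨hv1, hv2⟩ := hkey v hv
    have hb' := hb (ψ u) hu1 (ψ v) hv1
    rw [hu2, hv2] at hb'
    constructor
    · rw [inv_mul_le_iff₀ hCpos] at hb' ⊢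
      exact hb'.2
    · rw [← inv_mul_le_iff₀ hCpos]
      exact hb'.1

lemma BilipOn.restrict {X Y : Type*} [MetricSpace X] [MetricSpace Y]
    {E S : Set X} (φ : X → Y) (hφ : Set.BijOn φ E (φ '' E)) (C : ℝ) (hC : 1 ≤ C)
    (hb : ∀ x ∈ E, ∀ y ∈ E, C⁻¹ * dist x y ≤ dist (φ x) (φ y) ∧ dist (φ x) (φ y) ≤ C * dist x y)
    (hS : S ⊆ E) : BilipOn S (φ '' S) :=
  ⟨φ, (hφ.injOn.mono hS).bijOn_image, C, hC, fun x hx y hy => hb x (hS hx) y (hS hy)⟩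

lemma bilip_continuousOn {X Y : Type*} [MetricSpace X] [MetricSpace Y]
    {E : Set X} (φ : X → Y) (C : ℝ) (hC : 1 ≤ C)
    (h : ∀ x ∈ E, ∀ y ∈ E, dist (φ x) (φ y) ≤ C * dist x y) : ContinuousOn φ E := by
  have : LipschitzOnWith (Real.toNNReal C) φ E := by
    apply LipschitzOnWith.of_dist_le_mul
    intro x hx y hy
    simpa [Real.coe_toNNReal C (by linarith)] using h x hx y hy
  exact this.continuousOn

lemma BilipOn.isCompact {X Y : Type*} [MetricSpace X] [MetricSpace Y]
    {E : Set X} {F : Set Y} (hE : IsCompact E) (h : BilipOn E F) : IsCompact F := by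
  obtain ⟨φ, hφ, C, hC, hb⟩ := h
  rw [← hφ.image_eq]
  exact hE.image_of_continuousOn (bilip_continuousOn φ C hC (fun x hx y hy => (hb x hx y hy).2))

lemma BilipOn.nonempty {X Y : Type*} [MetricSpace X] [MetricSpace Y]
    {E : Set X} {F : Set Y} (hE : E.Nonempty) (h : BilipOn E F) : F.Nonempty := by
  obtain ⟨φ, hφ, -⟩ := h
  exact ⟨φ hE.choose, hφ.mapsTo hE.choose_spec⟩

/-- Separation of a finite family of pairwise disjoint compact sets. -/
lemma gap_lemma {X : Type*} [MetricSpace X] {n : ℕ} (P : Fin n → Set X)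
    (hc : ∀ i, IsCompact (P i)) (hd : ∀ i j, i ≠ j → Disjoint (P i) (P j)) :
    ∃ Δ : ℝ, 0 < Δ ∧ ∀ i j, i ≠ j → ∀ u ∈ P i, ∀ v ∈ P j, Δ ≤ dist u v := by
  classical
  set S : Set (X × X) := ⋃ (q : {p : Fin n × Fin n // p.1 ≠ p.2}),
    (P q.1.1) ×ˢ (P q.1.2) with hS
  have hScomp : IsCompact S := isCompact_iUnion fun q => (hc q.1.1).prod (hc q.1.2)
  rcases S.eq_empty_or_nonempty with hSe | hSne
  · refine ⟨1, one_pos, fun i j hij u hu v hv => ?_⟩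
    exfalso
    have : (u, v) ∈ S := Set.mem_iUnion.mpr ⟨⟨(i, j), hij⟩, Set.mk_mem_prod hu hv⟩
    rw [hSe] at this; exact this
  · obtain ⟨p0, hp0, hmin⟩ := hScomp.exists_isMinOn hSne
      (continuous_dist.continuousOn : ContinuousOn (fun p : X × X => dist p.1 p.2) S)
    refine ⟨dist p0.1 p0.2, ?_, fun i j hij u hu v hv => hmin
      (Set.mem_iUnion.mpr ⟨⟨(i, j), hij⟩, Set.mk_mem_prod hu hv⟩ : (u,v) ∈ S)⟩
    obtain ⟨q, hq⟩ := Set.mem_iUnion.mp hp0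
    have hne : p0.1 ≠ p0.2 := by
      intro h
      have h1 : p0.1 ∈ P q.1.1 := hq.1
      have h2 : p0.2 ∈ P q.1.2 := hq.2
      rw [h] at h1
      exact (hd q.1.1 q.1.2 q.2).le_bot ⟨h1, h2⟩
    exact dist_pos.mpr hne

/-- A compact set has a uniform distance bound. -/
lemma diam_bound {X : Type*} [MetricSpace X] {E : Set X} (hE : IsCompact E) :
    ∃ D : ℝ, ∀ x ∈ E, ∀ y ∈ E, dist x y ≤ D := by
  obtain ⟨D, hD⟩ := Metric.isBounded_iff.mp hE.isBounded
  exact ⟨D, fun x hx y hy => hD hx hy⟩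

/-- The core splitting lemma: a dust-like self-similar set splits into two
disjoint pieces each bilipschitz to the whole. -/
lemma split_lemma {X : Type*} [MetricSpace X]
    {E : Set X} (hEne : E.Nonempty) (hEc : IsCompact E)
    {N : ℕ} (hN : 2 ≤ N) (T : Fin N → X → X) (c : Fin N → ℝ)
    (hc : ∀ i, c i ∈ Set.Ioo (0 : ℝ) 1)
    (hsim : ∀ i x y, dist (T i x) (T i y) = c i * dist x y)
    (hunion : E = ⋃ i, T i '' E)
    (hdisj : ∀ i j : Fin N, i ≠ j → Disjoint (T i '' E) (T j '' E)) :
    ∃ G H : Set X, G ∪ H = E ∧ Disjoint G H ∧ IsCompact G ∧ IsCompact H ∧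
      G.Nonempty ∧ H.Nonempty ∧ BilipOn E G ∧ BilipOn E H := by
  classical
  set a : Fin N := ⟨0, by omega⟩ with ha
  set b : Fin N := ⟨1, by omega⟩ with hb
  have hab : a ≠ b := by simp [ha, hb, Fin.ext_iff]
  set A : Fin N → Set X := fun i => T i '' E with hA
  have hTsub : ∀ i, A i ⊆ E := by
    intro i
    calc A i ⊆ ⋃ j, T j '' E := Set.subset_iUnion (fun j => T j '' E) i
      _ = E := hunion.symm
  have hTinj : ∀ i, Function.Injective (T i) := by
    intro i x y hxy
    have h := hsim i x y
    rw [hxy, dist_self] at h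
    have := (hc i).1
    have : dist x y = 0 := by
      rcases mul_eq_zero.mp h.symm with h' | h'
      · exact absurd h' (ne_of_gt (hc i).1)
      · exact h'
    exact dist_eq_zero.mp this
  have hAc : ∀ i, IsCompact (A i) := by
    intro i
    apply hEc.image_of_continuousOn
    have : LipschitzOnWith (Real.toNNReal 1) (T i) E := by
      apply LipschitzOnWith.of_dist_le_mul
      intro x _ y _
      rw [hsim i x y]
      have h1 := (hc i).2
      have := dist_nonneg (x := x) (y := y)
      simp only [Real.toNNReal_one, NNReal.coe_one, one_mul]
      nlinarith
    exact this.continuousOn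
  have hAne : ∀ i, (A i).Nonempty := fun i => hEne.image (T i)
  obtain ⟨Δ, hΔpos, hΔ⟩ := gap_lemma A hAc hdisj
  obtain ⟨D, hD⟩ := diam_bound hEc
  have hΔD : Δ ≤ D := by
    obtain ⟨u, hu⟩ := hAne a
    obtain ⟨v, hv⟩ := hAne b
    exact (hΔ a b hab u hu v hv).trans (hD u (hTsub a hu) v (hTsub b hv))
  have hDpos : 0 < D := lt_of_lt_of_le hΔpos hΔD
  set cb : ℝ := c b with hcb
  have hcb0 : 0 < cb := (hc b).1
  have hcb1 : cb < 1 := (hc b).2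
  set Tb : X → X := T b with hTb
  -- iterates
  have hIk_mem : ∀ k, ∀ x ∈ E, Tb^[k] x ∈ E := by
    intro k
    induction k with
    | zero => intro x hx; simpa using hx
    | succ k ih =>
      intro x hx
      rw [Function.iterate_succ_apply']
      exact hTsub b ⟨Tb^[k] x, ih x hx, rfl⟩
  have hIk_dist : ∀ k x y, dist (Tb^[k] x) (Tb^[k] y) = cb^k * dist x y := by
    intro k
    induction k with
    | zero => intro x y; simp
    | succ k ih =>
      intro x y
      rw [Function.iterate_succ_apply', Function.iterate_succ_apply', hsim b, ih, pow_succ]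
      ring
  have hIk_inj : ∀ k, Function.Injective (Tb^[k]) := fun k => Function.Injective.iterate (hTinj b) k
  set W : Set X := ⋃ k : ℕ, Tb^[k] '' (A a) with hW
  have hB0 : Tb^[0] '' (A a) = A a := by simp
  have hBsubE : ∀ k, Tb^[k] '' (A a) ⊆ E := by
    rintro k z ⟨u, hu, rfl⟩
    exact hIk_mem k u (hTsub a hu)
  have hWsubE : W ⊆ E := by
    rintro z hz
    obtain ⟨k, hk⟩ := mem_iUnion.mp hz
    exact hBsubE k hk
  have hAaW : A a ⊆ W := by
    intro z hz
    exact mem_iUnion.mpr ⟨0, by simpa using hz⟩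
  have hTbW : ∀ x ∈ W, Tb x ∈ W ∧ Tb x ∉ A a := by
    intro x hx
    obtain ⟨k, hk⟩ := mem_iUnion.mp hx
    obtain ⟨u, hu, rfl⟩ := hk
    constructor
    · exact mem_iUnion.mpr ⟨k+1, ⟨u, hu, Function.iterate_succ_apply' Tb k u⟩⟩
    · intro hcon
      have hTx : Tb (Tb^[k] u) ∈ A b := ⟨Tb^[k] u, hIk_mem k u (hTsub a hu), rfl⟩
      exact (hdisj a b hab).le_bot ⟨hcon, hTx⟩
  -- the key geometric estimate for the Hilbert-hotel map
  have key : ∀ x ∈ W, ∀ y ∈ E, y ∉ W → ∃ s : ℕ,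
      cb^s * Δ ≤ dist x y ∧ dist x y ≤ cb^s * D ∧
      cb^(s+1) * Δ ≤ dist (Tb x) y ∧ dist (Tb x) y ≤ cb^s * D := by
    intro x hxW y hyE hyW
    obtain ⟨k, hk⟩ := mem_iUnion.mp hxW
    obtain ⟨x₁, hx₁, rfl⟩ := hk
    have hx₁E : x₁ ∈ E := hTsub a hx₁
    by_cases hy : y ∈ Tb^[k+1] '' E
    · -- y deeper than x
      obtain ⟨y₂, hy₂E, rfl⟩ := hy
      have hy₂a : y₂ ∉ A a := by
        intro hcon
        exact hyW (mem_iUnion.mpr ⟨k+1, ⟨y₂, hcon, rfl⟩⟩)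
      obtain ⟨j, hj⟩ := mem_iUnion.mp (hunion ▸ hy₂E)
      have hja : a ≠ j := by
        rintro rfl
        exact hy₂a hj
      refine ⟨k, ?_, ?_, ?_, ?_⟩
      · have h1 : dist (Tb^[k] x₁) (Tb^[k+1] y₂) = cb^k * dist x₁ (Tb y₂) := by
          rw [Function.iterate_succ_apply, hIk_dist]
        rw [h1]
        have hTy₂ : Tb y₂ ∈ A b := ⟨y₂, hy₂E, rfl⟩
        exact mul_le_mul_of_nonneg_left (hΔ a b hab x₁ hx₁ _ hTy₂) (by positivity)
      · have h1 : dist (Tb^[k] x₁) (Tb^[k+1] y₂) = cb^k * dist x₁ (Tb y₂) := by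
          rw [Function.iterate_succ_apply, hIk_dist]
        rw [h1]
        exact mul_le_mul_of_nonneg_left
          (hD x₁ hx₁E _ (hTsub b ⟨y₂, hy₂E, rfl⟩)) (by positivity)
      · have h2 : dist (Tb (Tb^[k] x₁)) (Tb^[k+1] y₂) = cb^(k+1) * dist x₁ y₂ := by
          rw [← Function.iterate_succ_apply' Tb k x₁, hIk_dist]
        rw [h2]
        exact mul_le_mul_of_nonneg_left (hΔ a j hja x₁ hx₁ y₂ hj) (by positivity)
      · have h2 : dist (Tb (Tb^[k] x₁)) (Tb^[k+1] y₂) = cb^(k+1) * dist x₁ y₂ := by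
          rw [← Function.iterate_succ_apply' Tb k x₁, hIk_dist]
        rw [h2]
        calc cb^(k+1) * dist x₁ y₂ ≤ cb^(k+1) * D :=
              mul_le_mul_of_nonneg_left (hD x₁ hx₁E y₂ hy₂E) (by positivity)
          _ ≤ cb^k * D := by
              apply mul_le_mul_of_nonneg_right _ (le_of_lt hDpos)
              calc cb^(k+1) = cb^k * cb := pow_succ cb k
                _ ≤ cb^k * 1 := mul_le_mul_of_nonneg_left (le_of_lt hcb1) (by positivity)
                _ = cb^k := mul_one _
    · -- y shallower than x
      obtain ⟨m, hym, hym1, hmk⟩ : ∃ m, y ∈ Tb^[m] '' E ∧ y ∉ Tb^[m+1] '' E ∧ m ≤ k := by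
        have hex : ∃ s, y ∉ Tb^[s] '' E := ⟨k+1, hy⟩
        have hm'pos : 0 < Nat.find hex := by
          rcases Nat.eq_zero_or_pos (Nat.find hex) with h | h
          · exfalso
            have := Nat.find_spec hex
            rw [h] at this
            exact this (by simpa using hyE)
          · exact h
        refine ⟨Nat.find hex - 1, ?_, ?_, ?_⟩
        · by_contra hcon
          exact Nat.find_min hex (show Nat.find hex - 1 < Nat.find hex by omega) hcon
        · have h1 : Nat.find hex - 1 + 1 = Nat.find hex := by omega
          rw [h1]
          exact Nat.find_spec hex
        · have := Nat.find_min' hex hy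
          omega
      obtain ⟨y₀, hy₀E, rfl⟩ := hym
      have hy₀b : y₀ ∉ A b := by
        rintro ⟨u, huE, rfl⟩
        exact hym1 ⟨u, huE, (Function.iterate_succ_apply Tb m u).symm⟩
      obtain ⟨j, hj⟩ := mem_iUnion.mp (hunion ▸ hy₀E)
      have hjb : j ≠ b := by
        rintro rfl
        exact hy₀b hj
      have hja : j ≠ a := by
        rintro rfl
        exact hyW (mem_iUnion.mpr ⟨m, ⟨y₀, hj, rfl⟩⟩)
      -- rewrite x at level m
      have hxsplit : Tb^[k] x₁ = Tb^[m] (Tb^[k-m] x₁) := by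
        rw [← Function.iterate_add_apply]
        congr 1
        omega
      have hx₂E : Tb^[k-m] x₁ ∈ E := hIk_mem _ _ hx₁E
      obtain ⟨i₂, hi₂mem, hi₂j⟩ : ∃ i₂, Tb^[k-m] x₁ ∈ A i₂ ∧ i₂ ≠ j := by
        rcases Nat.eq_or_lt_of_le hmk with heq | hlt
        · refine ⟨a, ?_, fun h => hja (h.symm)⟩
          have : k - m = 0 := by omega
          rw [this]
          simpa using hx₁
        · refine ⟨b, ?_, fun h => hjb (h.symm)⟩
          have hkm : k - m = (k - m - 1) + 1 := by omega
          rw [hkm, Function.iterate_succ_apply']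
          exact ⟨Tb^[k-m-1] x₁, hIk_mem _ _ hx₁E, rfl⟩
      have hd1 : dist (Tb^[k] x₁) (Tb^[m] y₀) = cb^m * dist (Tb^[k-m] x₁) y₀ := by
        rw [hxsplit, hIk_dist]
      have hd2 : dist (Tb (Tb^[k] x₁)) (Tb^[m] y₀) = cb^m * dist (Tb (Tb^[k-m] x₁)) y₀ := by
        rw [hxsplit, ← Function.iterate_succ_apply' Tb m, Function.iterate_succ_apply,
          hIk_dist]
      have hTbx₂ : Tb (Tb^[k-m] x₁) ∈ A b := ⟨Tb^[k-m] x₁, hx₂E, rfl⟩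
      refine ⟨m, ?_, ?_, ?_, ?_⟩
      · rw [hd1]
        exact mul_le_mul_of_nonneg_left (hΔ i₂ j hi₂j _ hi₂mem y₀ hj) (by positivity)
      · rw [hd1]
        exact mul_le_mul_of_nonneg_left (hD _ hx₂E y₀ hy₀E) (by positivity)
      · rw [hd2]
        calc cb^(m+1) * Δ ≤ cb^m * Δ := by
              apply mul_le_mul_of_nonneg_right _ (le_of_lt hΔpos)
              calc cb^(m+1) = cb^m * cb := pow_succ cb m
                _ ≤ cb^m * 1 := mul_le_mul_of_nonneg_left (le_of_lt hcb1) (by positivity)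
                _ = cb^m := mul_one _
          _ ≤ cb^m * dist (Tb (Tb^[k-m] x₁)) y₀ :=
              mul_le_mul_of_nonneg_left (hΔ b j hjb.symm _ hTbx₂ y₀ hj) (by positivity)
      · rw [hd2]
        exact mul_le_mul_of_nonneg_left
          (hD _ (hTsub b hTbx₂) y₀ hy₀E) (by positivity)
  -- the Hilbert-hotel map
  set h : X → X := fun x => if x ∈ W then Tb x else x with hhdef
  set C : ℝ := D / (cb * Δ) with hC
  have hcbΔ : 0 < cb * Δ := by positivity
  have hCpos : 0 < C := by positivity
  have hCmul : C * (cb * Δ) = D := div_mul_cancel₀ D (ne_of_gt hcbΔ)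
  have hC1 : 1 ≤ C := by
    rw [le_div_iff₀ hcbΔ]
    nlinarith
  have hCinvD : C⁻¹ * D = cb * Δ := by
    rw [hC, inv_div]
    field_simp
  have hCinv_le_cb : C⁻¹ ≤ cb := by
    have h1 : C⁻¹ * D ≤ cb * D := by
      rw [hCinvD]
      nlinarith
    have h2 : 0 < D := hDpos
    nlinarith
  have hCinv_le_one : C⁻¹ ≤ 1 := hCinv_le_cb.trans (le_of_lt hcb1)
  have hCinv_nonneg : (0:ℝ) ≤ C⁻¹ := by positivity
  -- one-sided mixed bound
  have mixed : ∀ x ∈ W, ∀ y ∈ E, y ∉ W →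
      C⁻¹ * dist x y ≤ dist (Tb x) y ∧ dist (Tb x) y ≤ C * dist x y := by
    intro x hx y hyE hyW
    obtain ⟨s, h1, h2, h3, h4⟩ := key x hx y hyE hyW
    have hps : (0:ℝ) < cb^s := pow_pos hcb0 s
    constructor
    · calc C⁻¹ * dist x y ≤ C⁻¹ * (cb^s * D) := mul_le_mul_of_nonneg_left h2 hCinv_nonneg
        _ = cb^s * (C⁻¹ * D) := by ring
        _ = cb^s * (cb * Δ) := by rw [hCinvD]
        _ = cb^(s+1) * Δ := by rw [pow_succ]; ring
        _ ≤ dist (Tb x) y := h3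
    · calc dist (Tb x) y ≤ cb^s * D := h4
        _ = cb^s * (C * (cb * Δ)) := by rw [hCmul]
        _ = C * (cb^(s+1) * Δ) := by rw [pow_succ]; ring
        _ ≤ C * (cb^s * Δ) := by
            apply mul_le_mul_of_nonneg_left _ (le_of_lt hCpos)
            have : cb^(s+1) ≤ cb^s := by
              calc cb^(s+1) = cb^s * cb := pow_succ cb s
                _ ≤ cb^s * 1 := mul_le_mul_of_nonneg_left (le_of_lt hcb1) (by positivity)
                _ = cb^s := mul_one _
            exact mul_le_mul_of_nonneg_right this (le_of_lt hΔpos)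
        _ ≤ C * dist x y := mul_le_mul_of_nonneg_left h1 (le_of_lt hCpos)
  -- two-sided bound for h
  have hbound : ∀ x ∈ E, ∀ y ∈ E,
      C⁻¹ * dist x y ≤ dist (h x) (h y) ∧ dist (h x) (h y) ≤ C * dist x y := by
    intro x hx y hy
    by_cases hxW : x ∈ W <;> by_cases hyW : y ∈ W
    · have hhx : h x = Tb x := if_pos hxW
      have hhy : h y = Tb y := if_pos hyW
      rw [hhx, hhy, hsim b x y]
      have hd := dist_nonneg (x := x) (y := y)
      constructor
      · exact mul_le_mul_of_nonneg_right hCinv_le_cb hd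
      · exact mul_le_mul_of_nonneg_right ((le_of_lt hcb1).trans hC1) hd
    · have hhx : h x = Tb x := if_pos hxW
      have hhy : h y = y := if_neg hyW
      rw [hhx, hhy]
      exact mixed x hxW y hy hyW
    · have hhx : h x = x := if_neg hxW
      have hhy : h y = Tb y := if_pos hyW
      rw [hhx, hhy, dist_comm x y, dist_comm x (Tb y)]
      exact mixed y hyW x hx hxW
    · have hhx : h x = x := if_neg hxW
      have hhy : h y = y := if_neg hyW
      rw [hhx, hhy]
      have hd := dist_nonneg (x := x) (y := y)
      constructor
      · nlinarith
      · nlinarith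
  -- h is a bijection from E onto E \ A a
  have hbij : Set.BijOn h E (E \ A a) := by
    refine ⟨?_, ?_, ?_⟩
    · intro x hx
      by_cases hxW : x ∈ W
      · have hhx : h x = Tb x := if_pos hxW
        rw [hhx]
        obtain ⟨hTbW1, hTbW2⟩ := hTbW x hxW
        exact ⟨hWsubE hTbW1, hTbW2⟩
      · have hhx : h x = x := if_neg hxW
        rw [hhx]
        exact ⟨hx, fun hcon => hxW (hAaW hcon)⟩
    · intro u hu v hv huv
      simp only [hhdef] at huv
      by_cases huW : u ∈ W <;> by_cases hvW : v ∈ W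
      · rw [if_pos huW, if_pos hvW] at huv
        exact hTinj b huv
      · rw [if_pos huW, if_neg hvW] at huv
        exact absurd (huv ▸ (hTbW u huW).1) hvW
      · rw [if_neg huW, if_pos hvW] at huv
        exact absurd (huv ▸ (hTbW v hvW).1) huW
      · rwa [if_neg huW, if_neg hvW] at huv
    · rintro z ⟨hzE, hza⟩
      by_cases hzW : z ∈ W
      · obtain ⟨k, hk⟩ := mem_iUnion.mp hzW
        obtain ⟨u, hu, rfl⟩ := hk
        have hk0 : k ≠ 0 := by
          rintro rfl
          exact hza (by simpa using hu)
        have hksplit : Tb^[k] u = Tb (Tb^[k-1] u) := by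
          conv_lhs => rw [show k = (k-1) + 1 by omega]
          rw [Function.iterate_succ_apply']
        refine ⟨Tb^[k-1] u, hBsubE (k-1) ⟨u, hu, rfl⟩, ?_⟩
        have hwW : Tb^[k-1] u ∈ W := mem_iUnion.mpr ⟨k-1, ⟨u, hu, rfl⟩⟩
        rw [hhdef]
        simp only [if_pos hwW]
        exact hksplit.symm
      · exact ⟨z, hzE, by rw [hhdef]; simp only [if_neg hzW]⟩
  -- conclusion
  refine ⟨A a, E \ A a, union_diff_cancel (hTsub a), disjoint_sdiff_right, hAc a, ?_, hAne a, ?_, ?_, ?_⟩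
  · -- E \ A a compact
    have heq : E \ A a = ⋃ j ∈ {j : Fin N | j ≠ a}, A j := by
      ext z
      constructor
      · rintro ⟨hzE, hza⟩
        obtain ⟨j, hj⟩ := mem_iUnion.mp (hunion ▸ hzE)
        have hja : j ≠ a := by
          rintro rfl
          exact hza hj
        exact mem_biUnion hja hj
      · intro hz
        obtain ⟨j, hja, hzj⟩ := mem_iUnion₂.mp hz
        exact ⟨hTsub j hzj, fun hcon => (hdisj j a hja).le_bot ⟨hzj, hcon⟩⟩
    rw [heq]
    exact (Set.toFinite {j : Fin N | j ≠ a}).isCompact_biUnion (fun j _ => hAc j)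
  · -- E \ A a nonempty
    obtain ⟨v, hv⟩ := hAne b
    exact ⟨v, hTsub b hv, fun hcon => (hdisj a b hab).le_bot ⟨hcon, hv⟩⟩
  · -- BilipOn E (A a)
    refine ⟨T a, (hTinj a).injOn.bijOn_image, (c a)⁻¹, ?_, ?_⟩
    · have h1 := (hc a).1
      have h2 := (hc a).2
      have h3 : (c a)⁻¹ * (c a) = 1 := inv_mul_cancel₀ (ne_of_gt h1)
      have h4 : (0:ℝ) ≤ (c a)⁻¹ := by positivity
      nlinarith
    · intro x hx y hy
      rw [hsim a x y, inv_inv]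
      have h1 := (hc a).1
      have h2 := (hc a).2
      have h3 : (c a)⁻¹ * (c a) = 1 := inv_mul_cancel₀ (ne_of_gt h1)
      have h4 : (0:ℝ) ≤ (c a)⁻¹ := by positivity
      have hd := dist_nonneg (x := x) (y := y)
      have h5 : 1 ≤ (c a)⁻¹ := by nlinarith
      have h6 : c a ≤ (c a)⁻¹ := by nlinarith
      constructor
      · exact le_refl _
      · exact mul_le_mul_of_nonneg_right h6 hd
  · -- BilipOn E (E \ A a)
    exact ⟨h, hbij, C, hC1, hbound⟩

/-- Splitting a bilipschitz copy of `E` into two pieces. -/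
lemma split_piece {X Y : Type*} [MetricSpace X] [MetricSpace Y] {E : Set X} {Q0 : Set Y}
    {G H : Set X}
    (hQ : BilipOn E Q0) (hGH : G ∪ H = E) (hGHd : Disjoint G H)
    (hGc : IsCompact G) (hHc : IsCompact H) (hGn : G.Nonempty) (hHn : H.Nonempty)
    (hEG : BilipOn E G) (hEH : BilipOn E H) :
    ∃ G' H' : Set Y, G' ∪ H' = Q0 ∧ Disjoint G' H' ∧ IsCompact G' ∧ IsCompact H' ∧
      G'.Nonempty ∧ H'.Nonempty ∧ BilipOn E G' ∧ BilipOn E H' := by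
  obtain ⟨ψ, hψ, C, hC, hb⟩ := hQ
  have hGsub : G ⊆ E := hGH ▸ subset_union_left
  have hHsub : H ⊆ E := hGH ▸ subset_union_right
  have hrestG : BilipOn G (ψ '' G) := ⟨ψ, (hψ.injOn.mono hGsub).bijOn_image, C, hC,
    fun x hx y hy => hb x (hGsub hx) y (hGsub hy)⟩
  have hrestH : BilipOn H (ψ '' H) := ⟨ψ, (hψ.injOn.mono hHsub).bijOn_image, C, hC,
    fun x hx y hy => hb x (hHsub hx) y (hHsub hy)⟩
  have hdisj' : Disjoint (ψ '' G) (ψ '' H) := by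
    rw [Set.disjoint_left]
    rintro z ⟨u, hu, rfl⟩ ⟨v, hv, hveq⟩
    have heq : v = u := hψ.injOn (hHsub hv) (hGsub hu) hveq
    exact hGHd.le_bot ⟨hu, heq ▸ hv⟩
  refine ⟨ψ '' G, ψ '' H, ?_, hdisj', hrestG.isCompact hGc, hrestH.isCompact hHc,
    hrestG.nonempty hGn, hrestH.nonempty hHn, hEG.trans hrestG, hEH.trans hrestH⟩
  rw [← image_union, hGH, hψ.image_eq]

/-- Partition of `E` into `n` pieces each bilipschitz to `E`. -/
lemma partition_lemma {X : Type*} [MetricSpace X]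
    {E : Set X} (hEne : E.Nonempty) (hEc : IsCompact E)
    {N : ℕ} (hN : 2 ≤ N) (T : Fin N → X → X) (c : Fin N → ℝ)
    (hc : ∀ i, c i ∈ Set.Ioo (0 : ℝ) 1)
    (hsim : ∀ i x y, dist (T i x) (T i y) = c i * dist x y)
    (hunion : E = ⋃ i, T i '' E)
    (hdisj : ∀ i j : Fin N, i ≠ j → Disjoint (T i '' E) (T j '' E)) :
    ∀ n : ℕ, 1 ≤ n → ∃ Q : Fin n → Set X, (⋃ i, Q i) = E ∧
      (∀ i j, i ≠ j → Disjoint (Q i) (Q j)) ∧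
      ∀ i, IsCompact (Q i) ∧ (Q i).Nonempty ∧ BilipOn E (Q i) := by
  intro n
  induction n with
  | zero => intro h; omega
  | succ n ih =>
    intro _
    rcases Nat.eq_zero_or_pos n with rfl | hn
    · refine ⟨fun _ => E, iUnion_const E, ?_, ?_⟩
      · intro i j hij
        exact absurd (Fin.ext (by omega)) hij
      · intro i
        exact ⟨hEc, hEne, bilipOn_refl E⟩
    · obtain ⟨Q, hQu, hQd, hQp⟩ := ih hn
      obtain ⟨G, H, hGH, hGHd, hGc, hHc, hGn, hHn, hEG, hEH⟩ :=
        split_lemma hEne hEc hN T c hc hsim hunion hdisj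
      set i0 : Fin n := ⟨0, hn⟩ with hi0
      obtain ⟨G', H', hGH', hd', hGc', hHc', hGn', hHn', hEG', hEH'⟩ :=
        split_piece (hQp i0).2.2 hGH hGHd hGc hHc hGn hHn hEG hEH
      have hG'sub : G' ⊆ Q i0 := hGH' ▸ subset_union_left
      have hH'sub : H' ⊆ Q i0 := hGH' ▸ subset_union_right
      have hQsubE : ∀ j, Q j ⊆ E := fun j => hQu ▸ subset_iUnion Q j
      refine ⟨fun i => if h : (i : ℕ) < n then (if (i:ℕ) = 0 then G' else Q ⟨i, h⟩) else H',
        ?_, ?_, ?_⟩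
      · ext z
        simp only [mem_iUnion]
        constructor
        · rintro ⟨i, hi⟩
          split_ifs at hi with h1 h2
          · exact hQsubE i0 (hG'sub hi)
          · exact hQsubE ⟨i, h1⟩ hi
          · exact hQsubE i0 (hH'sub hi)
        · intro hz
          obtain ⟨j, hj⟩ := mem_iUnion.mp (hQu ▸ hz)
          by_cases hj0 : j = i0
          · rw [hj0, ← hGH'] at hj
            rcases hj with hjG | hjH
            · refine ⟨⟨0, by omega⟩, ?_⟩
              rw [dif_pos (by omega : (0:ℕ) < n)]
              rw [if_pos rfl]
              exact hjG
            · refine ⟨⟨n, by omega⟩, ?_⟩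
              rw [dif_neg (by omega : ¬ (n:ℕ) < n)]
              exact hjH
          · refine ⟨⟨(j:ℕ), by omega⟩, ?_⟩
            have hjval : (j:ℕ) ≠ 0 := by
              intro hcon
              exact hj0 (Fin.ext (by simp [hi0, hcon]))
            rw [dif_pos (by omega : (j:ℕ) < n), if_neg hjval]
            have : (⟨(j:ℕ), j.isLt⟩ : Fin n) = j := Fin.ext rfl
            rw [this]
            exact hj
      · intro i j hij
        dsimp only
        have hvalne : (i:ℕ) ≠ (j:ℕ) := fun hcon => hij (Fin.ext hcon)
        by_cases h1 : (i:ℕ) < n <;> by_cases h3 : (j:ℕ) < n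
        · rw [dif_pos h1, dif_pos h3]
          by_cases h2 : (i:ℕ) = 0 <;> by_cases h4 : (j:ℕ) = 0
          · omega
          · rw [if_pos h2, if_neg h4]
            have hne : i0 ≠ (⟨(j:ℕ), h3⟩ : Fin n) := by
              intro hcon
              have := congrArg Fin.val hcon
              simp [hi0] at this
              omega
            exact (hQd i0 _ hne).mono_left hG'sub
          · rw [if_neg h2, if_pos h4]
            have hne : (⟨(i:ℕ), h1⟩ : Fin n) ≠ i0 := by
              intro hcon
              have := congrArg Fin.val hcon
              simp only [hi0, Fin.val_mk] at this
              omega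
            exact (hQd _ i0 hne).mono_right hG'sub
          · rw [if_neg h2, if_neg h4]
            have hne : (⟨(i:ℕ), h1⟩ : Fin n) ≠ (⟨(j:ℕ), h3⟩ : Fin n) := by
              intro hcon
              have := congrArg Fin.val hcon
              simp at this
              omega
            exact hQd _ _ hne
        · rw [dif_pos h1, dif_neg h3]
          by_cases h2 : (i:ℕ) = 0
          · rw [if_pos h2]
            exact hd'
          · rw [if_neg h2]
            have hne : (⟨(i:ℕ), h1⟩ : Fin n) ≠ i0 := by
              intro hcon
              have := congrArg Fin.val hcon
              simp only [hi0, Fin.val_mk] at this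
              omega
            exact (hQd _ i0 hne).mono_right hH'sub
        · rw [dif_neg h1, dif_pos h3]
          by_cases h4 : (j:ℕ) = 0
          · rw [if_pos h4]
            exact hd'.symm
          · rw [if_neg h4]
            have hne : i0 ≠ (⟨(j:ℕ), h3⟩ : Fin n) := by
              intro hcon
              have := congrArg Fin.val hcon
              simp [hi0] at this
              omega
            exact (hQd i0 _ hne).mono_left hH'sub
        · exact absurd (Fin.ext (by omega)) hij
      · intro i
        dsimp only
        split_ifs with h1 h2
        · exact ⟨hGc', hGn', hEG'⟩
        · exact hQp _
        · exact ⟨hHc', hHn', hEH'⟩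

/-- Gluing piecewise bilipschitz maps on separated compact pieces. -/
lemma glue_lemma {X Y : Type*} [MetricSpace X] [MetricSpace Y] {n : ℕ} (hn : 1 ≤ n)
    {K : Set Y} {E : Set X} (hKc : IsCompact K) (hEc : IsCompact E)
    (P : Fin n → Set Y) (Q : Fin n → Set X)
    (hPu : (⋃ i, P i) = K) (hQu : (⋃ i, Q i) = E)
    (hPd : ∀ i j, i ≠ j → Disjoint (P i) (P j)) (hQd : ∀ i j, i ≠ j → Disjoint (Q i) (Q j))
    (hPc : ∀ i, IsCompact (P i)) (hQc : ∀ i, IsCompact (Q i))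
    (hPQ : ∀ i, BilipOn (P i) (Q i)) :
    BilipOn K E := by
  classical
  haveI : Nonempty (Fin n) := ⟨⟨0, hn⟩⟩
  choose φ hφ C hC hb using hPQ
  obtain ⟨ΔP, hΔPpos, hΔP⟩ := gap_lemma P hPc hPd
  obtain ⟨ΔQ, hΔQpos, hΔQ⟩ := gap_lemma Q hQc hQd
  obtain ⟨DK₀, hDK₀⟩ := diam_bound hKc
  obtain ⟨DE₀, hDE₀⟩ := diam_bound hEc
  set DK : ℝ := max DK₀ ΔP with hDK
  set DE : ℝ := max DE₀ ΔQ with hDE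
  have hDKpos : 0 < DK := lt_of_lt_of_le hΔPpos (le_max_right _ _)
  have hDEpos : 0 < DE := lt_of_lt_of_le hΔQpos (le_max_right _ _)
  have hDKb : ∀ y ∈ K, ∀ y' ∈ K, dist y y' ≤ DK :=
    fun y hy y' hy' => (hDK₀ y hy y' hy').trans (le_max_left _ _)
  have hDEb : ∀ x ∈ E, ∀ x' ∈ E, dist x x' ≤ DE :=
    fun x hx x' hx' => (hDE₀ x hx x' hx').trans (le_max_left _ _)
  have hQsubE : ∀ i, Q i ⊆ E := fun i => hQu ▸ subset_iUnion Q i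
  have hPsubK : ∀ i, P i ⊆ K := fun i => hPu ▸ subset_iUnion P i
  set idx : Y → Fin n := fun y => if h : ∃ i, y ∈ P i then h.choose else ⟨0, hn⟩ with hidxdef
  have hidx : ∀ i, ∀ y ∈ P i, idx y = i := by
    intro i y hy
    have hex : ∃ i, y ∈ P i := ⟨i, hy⟩
    rw [hidxdef]
    simp only [dif_pos hex]
    by_contra hne
    exact (hPd _ i hne).le_bot ⟨hex.choose_spec, hy⟩
  set Φ : Y → X := fun y => φ (idx y) y with hΦdef
  have hmemP : ∀ y ∈ K, y ∈ P (idx y) := by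
    intro y hy
    obtain ⟨i, hi⟩ := mem_iUnion.mp (hPu ▸ hy)
    rw [hidx i y hi]
    exact hi
  have hΦval : ∀ i, ∀ y ∈ P i, Φ y = φ i y := by
    intro i y hy
    rw [hΦdef]
    simp only [hidx i y hy]
  -- constants
  set Cf : ℝ := Finset.univ.sup' Finset.univ_nonempty C with hCf
  have hCfle : ∀ i, C i ≤ Cf := fun i => Finset.le_sup' C (Finset.mem_univ i)
  have hCf1 : 1 ≤ Cf := (hC ⟨0, hn⟩).trans (hCfle ⟨0, hn⟩)
  set Cs : ℝ := max Cf (max (DE / ΔP) (DK / ΔQ)) with hCs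
  have hCs1 : 1 ≤ Cs := hCf1.trans (le_max_left _ _)
  have hCspos : 0 < Cs := lt_of_lt_of_le one_pos hCs1
  have hCsf : ∀ i, C i ≤ Cs := fun i => (hCfle i).trans (le_max_left _ _)
  have hCsE : DE / ΔP ≤ Cs := le_trans (le_max_left _ _) (le_max_right _ _)
  have hCsK : DK / ΔQ ≤ Cs := le_trans (le_max_right _ _) (le_max_right _ _)
  refine ⟨Φ, ⟨?_, ?_, ?_⟩, Cs, hCs1, ?_⟩
  · -- MapsTo
    intro y hy
    exact hQsubE (idx y) ((hφ (idx y)).mapsTo (hmemP y hy))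
  · -- InjOn
    intro y hy y' hy' hΦeq
    have h1 : y ∈ P (idx y) := hmemP y hy
    have h2 : y' ∈ P (idx y') := hmemP y' hy'
    by_cases hii : idx y = idx y'
    · apply (hφ (idx y)).injOn h1 (hii ▸ h2)
      rw [hΦdef] at hΦeq
      simpa [← hii] using hΦeq
    · exfalso
      have hq1 : Φ y ∈ Q (idx y) := (hφ (idx y)).mapsTo h1
      have hq2 : Φ y' ∈ Q (idx y') := (hφ (idx y')).mapsTo h2
      rw [hΦeq] at hq1
      exact (hQd _ _ hii).le_bot ⟨hq1, hq2⟩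
  · -- SurjOn
    intro z hz
    obtain ⟨j, hj⟩ := mem_iUnion.mp (hQu ▸ hz)
    obtain ⟨y, hy, hyz⟩ := (hφ j).surjOn hj
    exact ⟨y, hPsubK j hy, by rw [hΦval j y hy]; exact hyz⟩
  · -- bounds
    intro y hy y' hy'
    have h1 : y ∈ P (idx y) := hmemP y hy
    have h2 : y' ∈ P (idx y') := hmemP y' hy'
    have hq1 : Φ y ∈ Q (idx y) := (hφ (idx y)).mapsTo h1
    have hq2 : Φ y' ∈ Q (idx y') := (hφ (idx y')).mapsTo h2
    by_cases hii : idx y = idx y'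
    · set i := idx y with hi
      have hb' := hb i y h1 y' (hii ▸ h2)
      have hΦ1 : Φ y = φ i y := hΦval i y h1
      have hΦ2 : Φ y' = φ i y' := by
        rw [hΦval (idx y') y' h2, ← hii]
      rw [hΦ1, hΦ2]
      have hCipos : 0 < C i := lt_of_lt_of_le one_pos (hC i)
      constructor
      · calc Cs⁻¹ * dist y y' ≤ (C i)⁻¹ * dist y y' :=
              mul_le_mul_of_nonneg_right
                (inv_anti₀ hCipos (hCsf i)) dist_nonneg
          _ ≤ dist (φ i y) (φ i y') := hb'.1
      · calc dist (φ i y) (φ i y') ≤ C i * dist y y' := hb'.2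
          _ ≤ Cs * dist y y' := mul_le_mul_of_nonneg_right (hCsf i) dist_nonneg
    · have hgapP : ΔP ≤ dist y y' := hΔP _ _ hii y h1 y' h2
      have hgapQ : ΔQ ≤ dist (Φ y) (Φ y') := hΔQ _ _ hii _ hq1 _ hq2
      have hup : dist (Φ y) (Φ y') ≤ DE :=
        hDEb _ (hQsubE _ hq1) _ (hQsubE _ hq2)
      have hupK : dist y y' ≤ DK := hDKb y hy y' hy'
      constructor
      · have hle : Cs⁻¹ ≤ ΔQ / DK := by
          rw [← inv_div DK ΔQ]
          exact inv_anti₀ (div_pos hDKpos hΔQpos) hCsK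
        calc Cs⁻¹ * dist y y' ≤ (ΔQ / DK) * DK := by
              apply mul_le_mul hle hupK dist_nonneg
              positivity
          _ = ΔQ := div_mul_cancel₀ ΔQ (ne_of_gt hDKpos)
          _ ≤ dist (Φ y) (Φ y') := hgapQ
      · calc dist (Φ y) (Φ y') ≤ DE := hup
          _ = (DE / ΔP) * ΔP := (div_mul_cancel₀ DE (ne_of_gt hΔPpos)).symm
          _ ≤ Cs * dist y y' := by
              apply mul_le_mul hCsE hgapP (le_of_lt hΔPpos) (le_of_lt hCspos)

/-- **Lemma (Cooper–Pignataro).** Suppose `E` is a dust-like self-similar set in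
a compact metric space: `E` is nonempty compact and `E = ⋃_{i=1}^N T_i(E)` is a
pairwise disjoint union for contracting similitudes `T_i` (`N ≥ 2`). If
`K = ⋃_{i=1}^n f_i(E)` is a pairwise disjoint union with each `f_i` a
bilipschitz bijection onto its image (`n ≥ 1`), then `K` and `E` are
bilipschitz equivalent. -/
theorem disjoint_bilip_copies_bilip_self
    {X Y : Type*} [MetricSpace X] [CompactSpace X] [MetricSpace Y]
    (E : Set X) (hEne : E.Nonempty) (hEc : IsCompact E)
    (N : ℕ) (hN : 2 ≤ N) (T : Fin N → X → X) (c : Fin N → ℝ)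
    (hc : ∀ i, c i ∈ Set.Ioo (0 : ℝ) 1)
    (hsim : ∀ i x y, dist (T i x) (T i y) = c i * dist x y)
    (hunion : E = ⋃ i, T i '' E)
    (hdisj : ∀ i j : Fin N, i ≠ j → Disjoint (T i '' E) (T j '' E))
    (n : ℕ) (hn : 1 ≤ n) (f : Fin n → X → Y)
    (hf : ∀ i, ∃ C : ℝ, 1 ≤ C ∧ ∀ x ∈ E, ∀ y ∈ E,
      C⁻¹ * dist x y ≤ dist (f i x) (f i y) ∧ dist (f i x) (f i y) ≤ C * dist x y)
    (hfd : ∀ i j : Fin n, i ≠ j → Disjoint (f i '' E) (f j '' E))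
    (K : Set Y) (hK : K = ⋃ i, f i '' E) :
    BilipEquivSets K E := by
  classical
  have hfbilip : ∀ i, BilipOn E (f i '' E) := by
    intro i
    obtain ⟨C, hC, hb⟩ := hf i
    have hinj : Set.InjOn (f i) E := by
      intro x hx y hy hxy
      have h1 := (hb x hx y hy).1
      rw [hxy, dist_self] at h1
      have hCpos : 0 < C := lt_of_lt_of_le one_pos hC
      have hd : dist x y ≤ 0 := by
        have hinvpos : 0 < C⁻¹ := by positivity
        nlinarith [dist_nonneg (x := x) (y := y)]
      exact dist_eq_zero.mp (le_antisymm hd dist_nonneg)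
    exact ⟨f i, hinj.bijOn_image, C, hC, hb⟩
  have hPc : ∀ i, IsCompact (f i '' E) := fun i => (hfbilip i).isCompact hEc
  have hPn : ∀ i, (f i '' E).Nonempty := fun i => (hfbilip i).nonempty hEne
  have hKc : IsCompact K := by
    rw [hK]
    exact isCompact_iUnion hPc
  obtain ⟨Q, hQu, hQd, hQp⟩ :=
    partition_lemma hEne hEc hN T c hc hsim hunion hdisj n hn
  have hPQ : ∀ i, BilipOn (f i '' E) (Q i) := fun i =>
    ((hfbilip i).symm hEne).trans (hQp i).2.2
  have hglue : BilipOn K E :=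
    glue_lemma hn hKc hEc (fun i => f i '' E) Q hK.symm hQu hfd hQd hPc
      (fun i => (hQp i).1) hPQ
  obtain ⟨Φ, hΦ, C, hC, hb⟩ := hglue
  refine ⟨fun y => ⟨Φ y.1, hΦ.mapsTo y.2⟩, ⟨?_, ?_⟩, C, hC, ?_⟩
  · intro u v huv
    have h1 : Φ u.1 = Φ v.1 := congrArg Subtype.val huv
    exact Subtype.ext (hΦ.injOn u.2 v.2 h1)
  · intro z
    obtain ⟨y, hy, hyz⟩ := hΦ.surjOn z.2
    exact ⟨⟨y, hy⟩, Subtype.ext hyz⟩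
  · intro u v
    have h1 := hb u.1 u.2 v.1 v.2
    simpa [Subtype.dist_eq] using h1
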